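/- Two nondegenerate quadratic forms φ, φ' on a finite-dimensional vector space W over 𝔽_q (q odd) are isometric if and only if their Gauss sums Γ(W,φ) and Γ(W,φ') are equal. -/

import Mathlib

noncomputable section

/-- The standard additive character `χ(u) = exp(2πi Tr(u)/p)` of a finite field of
characteristic `p`, where `Tr` is the trace to the prime field. -/
def chiF (F : Type) [Field F] [Fintype F] (u : F) : ℂ :=
  letI : Algebra (ZMod (ringChar F)) F := ZMod.algebra F (ringChar F)
  Complex.exp (2 * Real.pi * Complex.I *
    ((Algebra.trace (ZMod (ringChar F)) F u).val : ℂ) / (ringChar F : ℂ))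

/-- The Gauss sum of a quadratic form `φ` on a finite `F`-vector space `W`. -/
def GaussSum (F : Type) [Field F] [Fintype F] (W : Type) [AddCommGroup W] [Module F W]
    [Fintype W] (φ : QuadraticForm F W) : ℂ :=
  ∑ w : W, chiF F (φ w)

/-- The quadratic character of `𝔽_q^×` (extended by `0` at `0`). -/
def psiF (F : Type) [Field F] [Fintype F] (a : F) : ℂ :=
  letI : Decidable (a = 0) := Classical.propDecidable _
  letI : Decidable (IsSquare a) := Classical.propDecidable _
  if a = 0 then 0 else if IsSquare a then 1 else -1

namespace GPf

open QuadraticMap Finset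

variable {F : Type} [Field F] [Fintype F]

instance : Fact (ringChar F).Prime := ⟨CharP.char_is_prime F _⟩

instance : NeZero (ringChar F) := ⟨(Fact.out : (ringChar F).Prime).ne_zero⟩

/-- `chiF` as an additive character. -/
def psi (F : Type) [Field F] [Fintype F] : AddChar F ℂ :=
  letI : Algebra (ZMod (ringChar F)) F := ZMod.algebra F (ringChar F)
  (ZMod.stdAddChar (N := ringChar F)).compAddMonoidHom
    (Algebra.trace (ZMod (ringChar F)) F).toAddMonoidHom

lemma psi_apply (u : F) : psi F u = chiF F u := by
  letI : Algebra (ZMod (ringChar F)) F := ZMod.algebra F (ringChar F)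
  rw [psi, AddChar.compAddMonoidHom_apply, ZMod.stdAddChar_apply, ZMod.toCircle_apply]
  simp [chiF]

lemma psi_ne_one : psi F ≠ 1 := by
  letI : Algebra (ZMod (ringChar F)) F := ZMod.algebra F (ringChar F)
  obtain ⟨b, hb⟩ := FiniteField.trace_to_zmod_nondegenerate F (one_ne_zero (α := F))
  rw [one_mul] at hb
  intro h
  apply hb
  have := congrArg (fun ψ : AddChar F ℂ => ψ b) h
  simp only [AddChar.one_apply] at this
  rw [psi, AddChar.compAddMonoidHom_apply] at this
  have h0 : ZMod.stdAddChar (N := ringChar F) ((Algebra.trace (ZMod (ringChar F)) F) b)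
      = ZMod.stdAddChar (0 : ZMod (ringChar F)) := by
    simpa using this
  exact ZMod.injective_stdAddChar h0

lemma psi_primitive : (psi F).IsPrimitive :=
  AddChar.IsPrimitive.of_ne_one (psi_ne_one)

/-- The quadratic character, with complex values. -/
def chx (F : Type) [Field F] [Fintype F] [DecidableEq F] : MulChar F ℂ :=
  (quadraticChar F).ringHomComp (Int.castRingHom ℂ)

variable [DecidableEq F]

lemma chx_ne_one (h2 : ringChar F ≠ 2) : chx F ≠ 1 := by
  obtain ⟨a, ha⟩ := FiniteField.exists_nonsquare h2
  have ha0 : a ≠ 0 := fun h => ha (h ▸ ⟨0, (mul_zero 0).symm⟩)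
  intro h
  have h1 : chx F a = 1 := by rw [h]; exact MulChar.one_apply (isUnit_iff_ne_zero.mpr ha0)
  rw [chx, MulChar.ringHomComp_apply, quadraticChar_neg_one_iff_not_isSquare.mpr ha] at h1
  norm_num at h1

lemma chx_sq_one (a : Fˣ) : chx F (a : F) * chx F (a : F) = 1 := by
  rw [chx, MulChar.ringHomComp_apply]
  rw [show ((Int.castRingHom ℂ) ((quadraticChar F) ↑a) * (Int.castRingHom ℂ)
    ((quadraticChar F) ↑a)) = (((quadraticChar F (a:F))^2 : ℤ) : ℂ) by
      simp only [eq_intCast]; push_cast; ring]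
  rw [quadraticChar_sq_one a.ne_zero]
  norm_num

lemma sum_quad (ψ : AddChar F ℂ) (h2 : ringChar F ≠ 2) (hψ : ψ.IsPrimitive) (a : Fˣ) :
    ∑ x : F, ψ ((a : F) * (x * x)) = chx F (a : F) * gaussSum (chx F) ψ := by
  have key : ∀ x : F, ψ ((a:F) * (x * x)) = ∑ u : F, if x * x = u then ψ ((a:F) * u) else 0 := by
    intro x
    rw [Finset.sum_ite_eq Finset.univ (x*x) (fun u => ψ ((a:F) * u))]
    simp
  rw [Finset.sum_congr rfl fun x _ => key x, Finset.sum_comm]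
  have count : ∀ u : F, (∑ x : F, if x * x = u then ψ ((a:F) * u) else 0)
      = ((quadraticChar F u : ℂ) + 1) * ψ ((a:F) * u) := by
    intro u
    rw [← Finset.sum_filter, Finset.sum_const]
    have hc : (Finset.univ.filter (fun x : F => x * x = u)).card
        = {x : F | x ^ 2 = u}.toFinset.card := by
      congr 1
      ext x
      simp [pow_two]
    have hz := quadraticChar_card_sqrts h2 u
    rw [hc, nsmul_eq_mul]
    congr 1
    have : (({x : F | x ^ 2 = u}.toFinset.card : ℤ) : ℂ) = ((quadraticChar F u : ℤ) : ℂ) + 1 := by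
      rw [hz]; push_cast; ring
    simpa using this
  rw [Finset.sum_congr rfl fun u _ => count u]
  have split : ∑ u : F, ((quadraticChar F u : ℂ) + 1) * ψ ((a:F) * u)
      = (∑ u : F, chx F u * ψ ((a:F) * u)) + ∑ u : F, ψ ((a:F) * u) := by
    rw [← Finset.sum_add_distrib]
    refine Finset.sum_congr rfl fun u _ => ?_
    rw [chx, MulChar.ringHomComp_apply]
    simp only [eq_intCast]
    ring
  rw [split]
  have hz : ∑ u : F, ψ ((a:F) * u) = 0 := by
    have := AddChar.sum_mulShift (ψ := ψ) (a : F) hψ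
    rw [if_neg a.ne_zero, Nat.cast_zero] at this
    rw [← this]
    exact Finset.sum_congr rfl fun u _ => by rw [mul_comm]
  have hg : ∑ u : F, chx F u * ψ ((a:F) * u) = gaussSum (chx F) (ψ.mulShift (a:F)) := by
    simp [gaussSum, AddChar.mulShift_apply]
  rw [hz, hg, add_zero]
  have := gaussSum_mulShift (chx F) ψ a
  calc gaussSum (chx F) (ψ.mulShift (a:F))
      = (chx F a * chx F a) * gaussSum (chx F) (ψ.mulShift (a:F)) := by rw [chx_sq_one]; ring
    _ = chx F (a:F) * gaussSum (chx F) ψ := by rw [mul_assoc, this]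

lemma gaussSum_ne_zero (ψ : AddChar F ℂ) (h2 : ringChar F ≠ 2) (hψ : ψ.IsPrimitive) :
    gaussSum (chx F) ψ ≠ 0 := by
  intro h
  have := gaussSum_mul_gaussSum_eq_card (chx_ne_one h2) hψ
  rw [h, zero_mul] at this
  have hcard : (Fintype.card F : ℂ) ≠ 0 := by exact_mod_cast Fintype.card_ne_zero
  exact hcard this.symm

omit [DecidableEq F] in
lemma gaussSum_invariant {W W' : Type} [AddCommGroup W] [Module F W] [Fintype W]
    [AddCommGroup W'] [Module F W'] [Fintype W']
    {φ : QuadraticForm F W} {φ' : QuadraticForm F W'} (e : φ.IsometryEquiv φ') :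
    GaussSum F W φ = GaussSum F W' φ' := by
  unfold GaussSum
  rw [← Equiv.sum_comp e.toLinearEquiv.toEquiv (fun w => chiF F (φ' w))]
  exact Finset.sum_congr rfl fun m _ => (congrArg (chiF F) (e.map_app m)).symm

omit [DecidableEq F] in
lemma gaussSum_wss_aux {n : ℕ} (w : Fin n → Fˣ) :
    GaussSum F (Fin n → F) (QuadraticMap.weightedSumSquares F w) =
      ∏ i, ∑ x : F, psi F ((w i : F) * (x * x)) := by
  unfold GaussSum
  have h1 : ∀ v : Fin n → F, chiF F (QuadraticMap.weightedSumSquares F w v)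
      = ∏ i, psi F ((w i : F) * (v i * v i)) := by
    intro v
    rw [← psi_apply, QuadraticMap.weightedSumSquares_apply]
    have : ∀ i : Fin n, w i • (v i * v i) = (w i : F) * (v i * v i) := fun i => rfl
    simp_rw [this]
    classical
    induction (Finset.univ : Finset (Fin n)) using Finset.cons_induction with
    | empty => simp
    | cons a s ha ih => rw [Finset.sum_cons, Finset.prod_cons, AddChar.map_add_eq_mul, ih]
  rw [Finset.sum_congr rfl fun v _ => h1 v]
  rw [← Fintype.piFinset_univ]
  exact Finset.sum_prod_piFinset Finset.univ (fun i x => psi F ((w i : F) * (x * x)))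

lemma gaussSum_wss (h2 : ringChar F ≠ 2) {n : ℕ} (w : Fin n → Fˣ) :
    GaussSum F (Fin n → F) (QuadraticMap.weightedSumSquares F w) =
      chx F ((∏ i, w i : Fˣ) : F) * (gaussSum (chx F) (psi F)) ^ n := by
  rw [gaussSum_wss_aux w]
  rw [Finset.prod_congr rfl fun i _ => sum_quad (psi F) h2 psi_primitive (w i)]
  rw [Finset.prod_mul_distrib, Finset.prod_const, Finset.card_univ, Fintype.card_fin]
  congr 1
  rw [← map_prod]
  congr 1
  push_cast
  rfl

abbrev sq1 (F : Type) [Field F] : QuadraticForm F F := QuadraticMap.sq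

abbrev wss {n : ℕ} (w : Fin n → Fˣ) : QuadraticForm F (Fin n → F) :=
  QuadraticMap.weightedSumSquares F w

/-- head/tail linear equivalence -/
def splitLE (F : Type) [Field F] (n : ℕ) : (Fin (n+1) → F) ≃ₗ[F] F × (Fin n → F) where
  toFun f := (f 0, Fin.tail f)
  invFun p := Fin.cons p.1 p.2
  map_add' f g := by
    refine Prod.ext rfl ?_
    funext i
    simp [Fin.tail]
  map_smul' c f := by
    refine Prod.ext rfl ?_
    funext i
    simp [Fin.tail]
  left_inv f := Fin.cons_self_tail f
  right_inv p := by
    refine Prod.ext ?_ ?_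
    · simp
    · simp [Fin.tail_cons]

def splitIso {n : ℕ} (w : Fin (n+1) → Fˣ) :
    (wss w).IsometryEquiv ((w 0 • sq1 F).prod (wss (Fin.tail w))) where
  toLinearEquiv := splitLE F n
  map_app' f := by
    simp only [splitLE, QuadraticMap.prod_apply, LinearEquiv.coe_mk, weightedSumSquares_apply,
      QuadraticMap.smul_apply, sq_apply, Fin.sum_univ_succ]
    rfl

def consIso {n : ℕ} (d : Fˣ) (v : Fin n → Fˣ) :
    (wss (Fin.cons d v)).IsometryEquiv ((d • sq1 F).prod (wss v)) where
  toLinearEquiv := splitLE F n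
  map_app' f := by
    simp only [splitLE, QuadraticMap.prod_apply, LinearEquiv.coe_mk, weightedSumSquares_apply,
      QuadraticMap.smul_apply, sq_apply, Fin.sum_univ_succ, Fin.cons_zero, Fin.cons_succ]
    rfl

def assocIso {M₁ M₂ M₃ : Type} [AddCommGroup M₁] [AddCommGroup M₂] [AddCommGroup M₃]
    [Module F M₁] [Module F M₂] [Module F M₃]
    (Q₁ : QuadraticForm F M₁) (Q₂ : QuadraticForm F M₂) (Q₃ : QuadraticForm F M₃) :
    ((Q₁.prod Q₂).prod Q₃).IsometryEquiv (Q₁.prod (Q₂.prod Q₃)) where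
  toLinearEquiv := LinearEquiv.prodAssoc F M₁ M₂ M₃
  map_app' m := by
    simp [LinearEquiv.prodAssoc, add_assoc]

lemma exists_sol (hodd : Fintype.card F % 2 = 1) (a b : Fˣ) :
    ∃ x y : F, (a : F) * (x * x) + (b : F) * (y * y) = 1 := by
  classical
  have hf2 : (Polynomial.C (a : F) * Polynomial.X ^ 2).degree = 2 := by
    rw [Polynomial.degree_C_mul_X_pow _ a.ne_zero]; rfl
  have hg2 : (Polynomial.C (b : F) * Polynomial.X ^ 2 - Polynomial.C 1).degree = 2 := by
    rw [Polynomial.degree_sub_eq_left_of_degree_lt]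
    · rw [Polynomial.degree_C_mul_X_pow _ b.ne_zero]; rfl
    · refine lt_of_le_of_lt (Polynomial.degree_C_le) ?_
      rw [Polynomial.degree_C_mul_X_pow _ b.ne_zero]
      norm_num
  obtain ⟨x, y, hxy⟩ := FiniteField.exists_root_sum_quadratic hf2 hg2 hodd
  refine ⟨x, y, ?_⟩
  simp only [Polynomial.eval_sub, Polynomial.eval_mul, Polynomial.eval_pow, Polynomial.eval_C,
    Polynomial.eval_X, Polynomial.eval_one] at hxy
  ring_nf
  ring_nf at hxy
  linear_combination hxy

def binaryIso (a b : Fˣ) (x y : F) (h : (a : F) * (x * x) + (b : F) * (y * y) = 1) :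
    (((a * b : Fˣ) • sq1 F).prod ((1 : Fˣ) • sq1 F)).IsometryEquiv
      ((a • sq1 F).prod (b • sq1 F)) where
  toLinearEquiv :=
  { toFun := fun p => ((b : F) * y * p.1 + x * p.2, -((a : F) * x) * p.1 + y * p.2)
    invFun := fun p => (y * p.1 - x * p.2, (a : F) * x * p.1 + (b : F) * y * p.2)
    map_add' := fun p q => by ext <;> simp <;> ring
    map_smul' := fun c p => by ext <;> simp <;> ring
    left_inv := fun p => by
      ext
      · simp only []
        linear_combination p.1 * h
      · simp only []
        linear_combination p.2 * h
    right_inv := fun p => by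
      ext
      · simp only []
        linear_combination p.1 * h
      · simp only []
        linear_combination p.2 * h }
  map_app' p := by
    simp only [QuadraticMap.prod_apply, QuadraticMap.smul_apply, sq_apply, LinearEquiv.coe_mk, Units.smul_def,
      smul_eq_mul, Units.val_mul, Units.val_one]
    ring_nf
    linear_combination ((a : F) * (b : F) * (p.1 * p.1) + p.2 * p.2) * h

def scaleIso (P P' c : Fˣ) (h : (P : F) = (c : F) * (c : F) * (P' : F)) :
    ((P : Fˣ) • sq1 F).IsometryEquiv (P' • sq1 F) where
  toLinearEquiv :=
  { toFun := fun m => (c : F) * m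
    invFun := fun m => ((c⁻¹ : Fˣ) : F) * m
    map_add' := fun p q => by ring
    map_smul' := fun r p => by simp; ring
    left_inv := fun p => by
      simp only [← mul_assoc, ← Units.val_mul, inv_mul_cancel, Units.val_one, one_mul]
    right_inv := fun p => by
      simp only [← mul_assoc, ← Units.val_mul, mul_inv_cancel, Units.val_one, one_mul] }
  map_app' m := by
    simp only [QuadraticMap.smul_apply, sq_apply, LinearEquiv.coe_mk, Units.smul_def,
      smul_eq_mul]
    linear_combination (-(m * m)) * h


lemma cons_one_one {n : ℕ} : (Fin.cons 1 (1 : Fin n → Fˣ)) = (1 : Fin (n+1) → Fˣ) := by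
  funext i
  refine Fin.cases ?_ ?_ i <;> simp

lemma step (hodd : Fintype.card F % 2 = 1) :
    ∀ (n : ℕ) (w : Fin (n+1) → Fˣ),
      QuadraticMap.Equivalent (wss w) (wss (Fin.cons (∏ i, w i) (1 : Fin n → Fˣ))) := by
  intro n
  induction n with
  | zero =>
    intro w
    have hw : Fin.cons (∏ i, w i) (1 : Fin 0 → Fˣ) = w := by
      funext i
      fin_cases i
      simp
    rw [hw]
  | succ n ih =>
    intro w
    set Dt : Fˣ := ∏ i, Fin.tail w i with hDt
    obtain ⟨x, y, hxy⟩ := exists_sol hodd (w 0) Dt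
    have prodw : ∏ i, w i = w 0 * Dt := by
      rw [hDt, Fin.prod_univ_succ]
      rfl
    have e1 : QuadraticMap.Equivalent (wss w)
        ((w 0 • sq1 F).prod (wss (Fin.tail w))) := ⟨splitIso w⟩
    have e2 : QuadraticMap.Equivalent ((w 0 • sq1 F).prod (wss (Fin.tail w)))
        ((w 0 • sq1 F).prod (wss (Fin.cons Dt (1 : Fin n → Fˣ)))) :=
      (QuadraticMap.Equivalent.refl _).prod (ih (Fin.tail w))
    have e3 : QuadraticMap.Equivalent
        ((w 0 • sq1 F).prod (wss (Fin.cons Dt (1 : Fin n → Fˣ))))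
        ((w 0 • sq1 F).prod ((Dt • sq1 F).prod (wss (1 : Fin n → Fˣ)))) :=
      (QuadraticMap.Equivalent.refl _).prod ⟨consIso Dt 1⟩
    have e4 : QuadraticMap.Equivalent
        ((w 0 • sq1 F).prod ((Dt • sq1 F).prod (wss (1 : Fin n → Fˣ))))
        (((w 0 • sq1 F).prod (Dt • sq1 F)).prod (wss (1 : Fin n → Fˣ))) :=
      ⟨(assocIso _ _ _).symm⟩
    have e5 : QuadraticMap.Equivalent
        (((w 0 • sq1 F).prod (Dt • sq1 F)).prod (wss (1 : Fin n → Fˣ)))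
        ((((w 0 * Dt) • sq1 F).prod ((1 : Fˣ) • sq1 F)).prod (wss (1 : Fin n → Fˣ))) :=
      QuadraticMap.Equivalent.prod ⟨(binaryIso (w 0) Dt x y hxy).symm⟩
        (QuadraticMap.Equivalent.refl _)
    have e6 : QuadraticMap.Equivalent
        ((((w 0 * Dt) • sq1 F).prod ((1 : Fˣ) • sq1 F)).prod (wss (1 : Fin n → Fˣ)))
        (((w 0 * Dt) • sq1 F).prod (((1 : Fˣ) • sq1 F).prod (wss (1 : Fin n → Fˣ)))) :=
      ⟨assocIso _ _ _⟩
    have e7 : QuadraticMap.Equivalent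
        (((w 0 * Dt) • sq1 F).prod (((1 : Fˣ) • sq1 F).prod (wss (1 : Fin n → Fˣ))))
        (((w 0 * Dt) • sq1 F).prod (wss (Fin.cons (1 : Fˣ) (1 : Fin n → Fˣ)))) :=
      (QuadraticMap.Equivalent.refl _).prod ⟨(consIso 1 1).symm⟩
    have e8 : QuadraticMap.Equivalent
        (((w 0 * Dt) • sq1 F).prod (wss (Fin.cons (1 : Fˣ) (1 : Fin n → Fˣ))))
        (wss (Fin.cons (∏ i, w i) (1 : Fin (n+1) → Fˣ))) := by
      rw [cons_one_one, prodw]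
      exact ⟨(consIso (w 0 * Dt) 1).symm⟩
    exact ((((((e1.trans e2).trans e3).trans e4).trans e5).trans e6).trans e7).trans e8

lemma equiv_of_sq (hodd : Fintype.card F % 2 = 1) {n : ℕ} (w w' : Fin n → Fˣ) (c : Fˣ)
    (hc : (∏ i, w i) = c * c * ∏ i, w' i) :
    QuadraticMap.Equivalent (wss w) (wss w') := by
  cases n with
  | zero =>
    have : wss w = wss w' := by
      ext v
      simp [QuadraticMap.weightedSumSquares_apply]
    rw [this]
  | succ n =>
    refine ((step hodd n w).trans ?_).trans (step hodd n w').symm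
    have hval : ((∏ i, w i : Fˣ) : F) = (c : F) * (c : F) * ((∏ i, w' i : Fˣ) : F) := by
      rw [hc]; push_cast; ring
    have e1 : QuadraticMap.Equivalent (wss (Fin.cons (∏ i, w i) (1 : Fin n → Fˣ)))
        (((∏ i, w i : Fˣ) • sq1 F).prod (wss (1 : Fin n → Fˣ))) := ⟨consIso _ _⟩
    have e2 : QuadraticMap.Equivalent
        (((∏ i, w i : Fˣ) • sq1 F).prod (wss (1 : Fin n → Fˣ)))
        (((∏ i, w' i : Fˣ) • sq1 F).prod (wss (1 : Fin n → Fˣ))) :=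
      QuadraticMap.Equivalent.prod ⟨scaleIso _ _ c hval⟩ (QuadraticMap.Equivalent.refl _)
    have e3 : QuadraticMap.Equivalent
        (((∏ i, w' i : Fˣ) • sq1 F).prod (wss (1 : Fin n → Fˣ)))
        (wss (Fin.cons (∏ i, w' i) (1 : Fin n → Fˣ))) := ⟨(consIso _ _).symm⟩
    exact (e1.trans e2).trans e3


end GPf

open GPf in
/-- Two nondegenerate quadratic forms on a finite-dimensional vector space over a finite
field of odd order are isometric if and only if their Gauss sums are equal. -/
theorem stmt_3 (F : Type) [Field F] [Fintype F] (hodd : Odd (Fintype.card F))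
    (W : Type) [AddCommGroup W] [Module F W] [Fintype W]
    (φ φ' : QuadraticForm F W)
    (hnd : φ.polarBilin.Nondegenerate) (hnd' : φ'.polarBilin.Nondegenerate) :
    QuadraticMap.Equivalent φ φ' ↔ GaussSum F W φ = GaussSum F W φ' := by
  classical
  have hcard : Fintype.card F % 2 = 1 := Nat.odd_iff.mp hodd
  have h2 : ringChar F ≠ 2 := by
    intro h
    rw [FiniteField.even_card_iff_char_two.mp h] at hcard
    exact absurd hcard (by norm_num)
  haveI : Invertible (2 : F) := invertibleOfNonzero (Ring.two_ne_zero h2)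
  constructor
  · rintro ⟨e⟩
    exact gaussSum_invariant e
  · intro hG
    -- diagonalize both forms
    have hsep : ∀ (ψ : QuadraticForm F W), ψ.polarBilin.Nondegenerate →
        (QuadraticMap.associated (R := F) ψ).SeparatingLeft := by
      intro ψ hψ x hx
      apply hψ.1 x
      intro y
      have hxy := hx y
      rw [QuadraticMap.associated_apply] at hxy
      rcases smul_eq_zero.mp hxy with h | h
      · exact absurd h (Invertible.ne_zero _)
      · rw [QuadraticMap.polarBilin_apply_apply]
        exact h
    obtain ⟨w, hw⟩ :=
      QuadraticForm.equivalent_weightedSumSquares_units_of_nondegenerate' φ (hsep φ hnd)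
    obtain ⟨w', hw'⟩ :=
      QuadraticForm.equivalent_weightedSumSquares_units_of_nondegenerate' φ' (hsep φ' hnd')
    obtain ⟨e⟩ := hw
    obtain ⟨e'⟩ := hw'
    have hGw : GaussSum F _ (QuadraticMap.weightedSumSquares F w)
        = GaussSum F _ (QuadraticMap.weightedSumSquares F w') := by
      rw [← gaussSum_invariant e, ← gaussSum_invariant e', hG]
    rw [gaussSum_wss h2 w, gaussSum_wss h2 w'] at hGw
    have hgne : (gaussSum (chx F) (psi F)) ^ (Module.finrank F W) ≠ 0 :=
      pow_ne_zero _ (gaussSum_ne_zero (psi F) h2 psi_primitive)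
    have hchx : chx F ((∏ i, w i : Fˣ) : F) = chx F ((∏ i, w' i : Fˣ) : F) :=
      mul_right_cancel₀ hgne hGw
    have hq : quadraticChar F ((∏ i, w i : Fˣ) : F)
        = quadraticChar F ((∏ i, w' i : Fˣ) : F) := by
      have := hchx
      rw [chx, MulChar.ringHomComp_apply, MulChar.ringHomComp_apply] at this
      simp only [eq_intCast] at this
      exact_mod_cast this
    -- shows that the quotient of discriminants is a square
    set A : Fˣ := ∏ i, w i
    set A' : Fˣ := ∏ i, w' i
    have hqq : quadraticChar F ((A * A'⁻¹ : Fˣ) : F) = 1 := by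
      rw [Units.val_mul, map_mul, hq]
      rw [Units.val_inv_eq_inv_val]
      rw [← map_mul, mul_inv_cancel₀ A'.ne_zero, map_one]
    have hsq : IsSquare ((A * A'⁻¹ : Fˣ) : F) :=
      (quadraticChar_one_iff_isSquare (A * A'⁻¹).ne_zero).mp hqq
    obtain ⟨r, hr⟩ := hsq
    have hrne : r ≠ 0 := by
      intro h
      rw [h, mul_zero] at hr
      exact (A * A'⁻¹).ne_zero hr
    have hval : (A : F) = r * r * (A' : F) := by
      have h1 : (A : F) * ((A' : F))⁻¹ = r * r := by
        rw [← hr, Units.val_mul, Units.val_inv_eq_inv_val]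
      field_simp at h1
      linear_combination h1
    have hc : A = (Units.mk0 r hrne) * (Units.mk0 r hrne) * A' := by
      ext
      simp only [Units.val_mul, Units.val_mk0]
      exact hval
    have heq : QuadraticMap.Equivalent (wss w) (wss w') :=
      equiv_of_sq hcard w w' (Units.mk0 r hrne) hc
    exact QuadraticMap.Equivalent.trans ⟨e⟩
      (heq.trans (QuadraticMap.Equivalent.symm ⟨e'⟩))


end
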